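/- Let P be a finite p-group admitting an automorphism φ of order p^n with exactly p^m fixed points, and suppose P^{p^f} = 1 for some f (i.e., P has exponent dividing p^f). Then P can be generated by at most m·p^n elements. -/

import Mathlib

open Subgroup
open scoped commutatorElement

section AuxLemmasForStmt19


/-- Fixed points in a quotient are at most fixed points in the group. -/
lemma fixquot {G G' : Type*} [Group G] [Finite G] [Group G'] (π : G →* G')
    (hs : Function.Surjective π) (φ : G ≃* G) (φ' : G' ≃* G')
    (hc : ∀ x, π (φ x) = φ' (π x)) :
    Nat.card {y : G' // φ' y = y} ≤ Nat.card {x : G // φ x = x} := by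
  classical
  haveI : Finite G' := Finite.of_surjective π hs
  set f : G → G := fun x => x⁻¹ * φ x with hf
  set T : Set G := {x | φ' (π x) = π x} with hT
  -- equivalence T ≃ Fix' × ker π
  have e1 : T ≃ {y : G' // φ' y = y} × π.ker := by
    refine ⟨fun x => (⟨π x.1, x.2⟩, ⟨(Function.surjInv hs (π x.1))⁻¹ * x.1, ?_⟩),
      fun yk => ⟨Function.surjInv hs yk.1.1 * yk.2.1, ?_⟩, ?_, ?_⟩
    · simp [MonoidHom.mem_ker, Function.surjInv_eq hs]
    · have h1 : π (yk.2.1 : G) = 1 := yk.2.2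
      show φ' (π _) = π _
      simp [map_mul, h1, Function.surjInv_eq hs, yk.1.2]
    · rintro ⟨x, hx⟩
      simp
    · rintro ⟨⟨y, hy⟩, ⟨k, hk⟩⟩
      have h1 : π k = 1 := hk
      have : π (Function.surjInv hs y * k) = y := by
        simp [map_mul, h1, Function.surjInv_eq hs]
      simp [this]
  -- a section of `f` on `f '' T`
  set s : G → G := fun v => if h : ∃ x ∈ T, f x = v then h.choose else 1 with hs'
  have hsec : ∀ x ∈ T, f (s (f x)) = f x := by
    intro x hx
    have h : ∃ y ∈ T, f y = f x := ⟨x, hx, rfl⟩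
    simp only [hs', dif_pos h]
    exact h.choose_spec.2
  -- injection T ↪ ker π × Fix
  have e2 : ∃ g : T → π.ker × {x : G // φ x = x}, Function.Injective g := by
    refine ⟨fun x => (⟨f x.1, ?_⟩, ⟨x.1 * (s (f x.1))⁻¹, ?_⟩), ?_⟩
    · have := x.2
      simp only [hT, Set.mem_setOf_eq] at this
      simp [MonoidHom.mem_ker, hf, map_mul, hc, this]
    · have h := hsec x.1 x.2
      simp only [hf] at h
      -- h : (s (f x))⁻¹ * φ (s (f x)) = x⁻¹ * φ x
      have : φ (x.1 * (s (f x.1))⁻¹) = x.1 * (s (f x.1))⁻¹ := by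
        set a := s (f x.1)
        have h' : a⁻¹ * φ a = x.1⁻¹ * φ x.1 := h
        rw [map_mul, map_inv]
        have : φ x.1 = x.1 * (a⁻¹ * φ a) := by rw [h']; group
        rw [this]; group
      exact this
    · rintro ⟨x, hx⟩ ⟨y, hy⟩ hxy
      simp only [Prod.mk.injEq, Subtype.mk.injEq] at hxy
      obtain ⟨h1, h2⟩ := hxy
      have : x = y := by
        have := h2
        rw [h1] at this
        exact mul_right_cancel this
      simpa using this
  obtain ⟨g, hg⟩ := e2
  have hcard1 : Nat.card T = Nat.card {y : G' // φ' y = y} * Nat.card π.ker := by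
    rw [Nat.card_congr e1, Nat.card_prod]
  have hcard2 : Nat.card T ≤ Nat.card π.ker * Nat.card {x : G // φ x = x} := by
    calc Nat.card T ≤ Nat.card (π.ker × {x : G // φ x = x}) := Nat.card_le_card_of_injective g hg
    _ = _ := Nat.card_prod _ _
  have hker : 0 < Nat.card π.ker := Nat.card_pos
  have := hcard1 ▸ hcard2
  rw [mul_comm (Nat.card π.ker)] at this
  exact Nat.le_of_mul_le_mul_right this hker


lemma mem_frattini_of_forall_coatom {G : Type*} [Group G] {x : G}
    (h : ∀ M : Subgroup G, IsCoatom M → x ∈ M) : x ∈ frattini G := by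
  simp only [frattini, Order.radical, Subgroup.mem_iInf]
  exact fun M hM => h M hM

lemma coatom_closed {p : ℕ} (hp : Fact p.Prime) {P : Type*} [Group P] [Finite P]
    (hP : IsPGroup p P) {M : Subgroup P} (hM : IsCoatom M) :
    (∀ x y : P, ⁅x, y⁆ ∈ M) ∧ (∀ x : P, x ^ p ∈ M) := by
  classical
  haveI : Group.IsNilpotent P := hP.isNilpotent
  haveI hMn : M.Normal :=
    Subgroup.NormalizerCondition.normal_of_coatom M (normalizerCondition_of_isNilpotent) hM
  set Q := P ⧸ M with hQ
  have hQp : IsPGroup p Q := hP.to_quotient M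
  -- every subgroup of Q is ⊥ or ⊤
  have hsub : ∀ K : Subgroup Q, K = ⊥ ∨ K = ⊤ := by
    intro K
    have hle : M ≤ K.comap (QuotientGroup.mk' M) := by
      intro x hx
      have h1 : QuotientGroup.mk' M x = 1 := (QuotientGroup.eq_one_iff x).mpr hx
      simp only [Subgroup.mem_comap, h1]
      exact K.one_mem
    have hK : K = (K.comap (QuotientGroup.mk' M)).map (QuotientGroup.mk' M) :=
      (Subgroup.map_comap_eq_self_of_surjective (QuotientGroup.mk'_surjective M) K).symm
    rcases eq_or_lt_of_le hle with h | h
    · left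
      rw [hK, ← h]
      rw [eq_bot_iff]
      rintro y ⟨x, hx, rfl⟩
      simp [(QuotientGroup.eq_one_iff x).mpr hx]
    · right
      rw [hK, hM.2 _ h]
      exact Subgroup.map_top_of_surjective _ (QuotientGroup.mk'_surjective M)
  -- Q nontrivial
  have hnt : Nontrivial Q := by
    obtain ⟨x, hx⟩ : ∃ x, x ∉ M := by
      by_contra h
      push_neg at h
      exact hM.1 ((Subgroup.eq_top_iff' M).mpr h)
    have : (QuotientGroup.mk x : Q) ≠ 1 := fun h => hx ((QuotientGroup.eq_one_iff x).mp h)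
    exact ⟨⟨QuotientGroup.mk x, 1, this⟩⟩
  -- get a generator of prime order
  obtain ⟨a, ha⟩ := exists_ne (1 : Q)
  have hza : Subgroup.zpowers a = ⊤ := by
    rcases hsub (Subgroup.zpowers a) with h | h
    · exact absurd (Subgroup.zpowers_eq_bot.mp h) ha
    · exact h
  have hcardQ : Nat.card Q = orderOf a := by
    rw [← Nat.card_zpowers, hza, Subgroup.card_top]
  obtain ⟨k, hk⟩ := hQp a
  obtain ⟨j, hj, horda⟩ := (Nat.dvd_prime_pow hp.out).mp (orderOf_dvd_of_pow_eq_one hk)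
  have hj1 : j ≠ 0 := by
    rintro rfl
    simp only [pow_zero, orderOf_eq_one_iff] at horda
    exact ha horda
  have hjeq : j = 1 := by
    by_contra hj2
    have h2 : 2 ≤ j := by omega
    set b := a ^ p with hb
    have hordb : orderOf b = p ^ (j - 1) := by
      rw [hb, orderOf_pow, horda, Nat.gcd_eq_right (dvd_pow_self p hj1)]
      have : p ^ j = p ^ (j - 1) * p := by
        rw [← pow_succ]
        congr 1
        omega
      rw [this, Nat.mul_div_cancel _ hp.out.pos]
    have hbne : b ≠ 1 := by
      intro h
      rw [h, orderOf_one] at hordb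
      have h2' : 1 < p ^ (j - 1) := Nat.one_lt_pow (by omega) hp.out.one_lt
      omega
    have hzb : Subgroup.zpowers b = ⊤ := by
      rcases hsub (Subgroup.zpowers b) with h | h
      · exact absurd (Subgroup.zpowers_eq_bot.mp h) hbne
      · exact h
    have : Nat.card Q = orderOf b := by
      rw [← Nat.card_zpowers, hzb, Subgroup.card_top]
    rw [hcardQ, horda, hordb] at this
    have := hp.out.one_lt
    have hlt : p ^ (j - 1) < p ^ j := Nat.pow_lt_pow_right hp.out.one_lt (by omega)
    omega
  have hcard : Nat.card Q = p := by rw [hcardQ, horda, hjeq, pow_one]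
  constructor
  · intro x y
    rw [← QuotientGroup.eq_one_iff]
    have hcomm : ∀ u v : Q, u * v = v * u := by
      intro u v
      have hu : u ∈ Subgroup.zpowers a := hza ▸ Subgroup.mem_top u
      have hv : v ∈ Subgroup.zpowers a := hza ▸ Subgroup.mem_top v
      obtain ⟨su, rfl⟩ := hu
      obtain ⟨sv, rfl⟩ := hv
      exact zpow_mul_comm a su sv
    show QuotientGroup.mk' M ⁅x, y⁆ = 1
    rw [map_commutatorElement]
    exact commutatorElement_eq_one_iff_mul_comm.mpr (hcomm _ _)
  · intro x
    rw [← QuotientGroup.eq_one_iff]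
    show QuotientGroup.mk' M (x ^ p) = 1
    rw [map_pow, ← hcard]
    exact pow_card_eq_one'


lemma nilp_rank {F V : Type*} [Field F] [AddCommGroup V] [Module F V] [FiniteDimensional F V]
    (δ : V →ₗ[F] V) (q mm : ℕ) (h0 : δ ^ q = 0)
    (hk : Module.finrank F (LinearMap.ker δ) ≤ mm) :
    Module.finrank F V ≤ mm * q := by
  have key : ∀ j : ℕ, Module.finrank F (LinearMap.ker (δ ^ j)) ≤ mm * j := by
    intro j
    induction j with
    | zero => simp [pow_zero, Module.End.one_eq_id, LinearMap.ker_id]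
    | succ j ih =>
      set f : LinearMap.ker (δ ^ (j + 1)) →ₗ[F] V := δ.domRestrict (LinearMap.ker (δ ^ (j + 1)))
        with hf
      have hrange : LinearMap.range f ≤ LinearMap.ker (δ ^ j) := by
        rintro y ⟨⟨x, hx⟩, rfl⟩
        simp only [LinearMap.mem_ker] at hx ⊢
        have : (δ ^ (j + 1)) x = (δ ^ j) (δ x) := by
          rw [pow_succ, Module.End.mul_apply]
        rw [hf]
        simp only [LinearMap.domRestrict_apply]
        rw [← this, hx]
      have h1 : Module.finrank F (LinearMap.ker (δ ^ (j + 1)))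
          = Module.finrank F (LinearMap.range f) + Module.finrank F (LinearMap.ker f) :=
        (LinearMap.finrank_range_add_finrank_ker f).symm
      have h2 : Module.finrank F (LinearMap.range f) ≤ mm * j :=
        le_trans (Submodule.finrank_mono hrange) ih
      have h3 : Module.finrank F (LinearMap.ker f) ≤ mm := by
        refine le_trans ?_ hk
        have hmem : ∀ x : LinearMap.ker f, ((x : LinearMap.ker (δ ^ (j + 1))) : V)
            ∈ LinearMap.ker δ := by
          rintro ⟨⟨x, hx⟩, hfx⟩
          simpa [hf, LinearMap.mem_ker, LinearMap.domRestrict_apply] using hfx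
        set g : LinearMap.ker f →ₗ[F] LinearMap.ker δ :=
          { toFun := fun x => ⟨((x : LinearMap.ker (δ ^ (j + 1))) : V), hmem x⟩
            map_add' := fun x y => rfl
            map_smul' := fun c x => rfl } with hg'
        have hg : Function.Injective g := by
          rintro ⟨⟨x, hx⟩, hfx⟩ ⟨⟨y, hy⟩, hfy⟩ hxy
          simp only [hg', LinearMap.coe_mk, AddHom.coe_mk, Subtype.mk.injEq] at hxy
          simp [Subtype.mk.injEq, hxy]
        exact LinearMap.finrank_le_finrank_of_injective hg
      have hmul : mm * (j + 1) = mm * j + mm := by ring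
      omega
  have hq := key q
  rw [h0, LinearMap.ker_zero] at hq
  rw [finrank_top] at hq
  linarith [hq]

end AuxLemmasForStmt19

/-- Let `P` be a finite `p`-group admitting an automorphism `φ` of order
`p^n` with exactly `p^m` fixed points, and suppose `P` has exponent dividing `p^f`.  Then
`P` can be generated by at most `m * p^n` elements. -/
theorem stmt19 (p n m f : ℕ) (hp : p.Prime)
    (P : Type*) [Group P] [Finite P] (hcard : ∃ e : ℕ, Nat.card P = p ^ e)
    (φ : MulAut P) (hord : orderOf φ = p ^ n)
    (hfix : Nat.card {x : P // φ x = x} = p ^ m)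
    (hexp : ∀ x : P, x ^ (p ^ f) = 1) :
    ∃ S : Finset P, S.card ≤ m * p ^ n ∧ Subgroup.closure (S : Set P) = ⊤ := by
  classical
  haveI fp : Fact p.Prime := ⟨hp⟩
  haveI : NeZero p := ⟨hp.ne_zero⟩
  have hPg : IsPGroup p P := fun g => ⟨f, hexp g⟩
  set F := frattini P with hF
  have hmap : F.map φ.toMonoidHom = F :=
    Subgroup.characteristic_iff_map_eq.mp inferInstance φ
  set Q := P ⧸ F with hQdef
  set φQ : Q ≃* Q := QuotientGroup.congr F F (φ : P ≃* P) hmap with hφQ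
  have hc : ∀ x : P, (QuotientGroup.mk' F) (φ x) = φQ ((QuotientGroup.mk' F) x) := fun x => rfl
  -- fixed-point bound in the quotient
  have hfixQ : Nat.card {y : Q // φQ y = y} ≤ p ^ m := by
    rw [← hfix]
    exact fixquot (QuotientGroup.mk' F) (QuotientGroup.mk'_surjective F) (φ : P ≃* P) φQ hc
  -- Q is elementary abelian
  have hfrat : ∀ x y : P, ⁅x, y⁆ ∈ F ∧ ∀ z : P, z ^ p ∈ F := by
    intro x y
    constructor
    · exact mem_frattini_of_forall_coatom fun M hM => (coatom_closed fp hPg hM).1 x y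
    · exact fun z => mem_frattini_of_forall_coatom fun M hM => (coatom_closed fp hPg hM).2 z
  have hQcomm : ∀ a b : Q, a * b = b * a := by
    intro a b
    obtain ⟨x, rfl⟩ := QuotientGroup.mk'_surjective F a
    obtain ⟨y, rfl⟩ := QuotientGroup.mk'_surjective F b
    apply commutatorElement_eq_one_iff_mul_comm.mp
    rw [← map_commutatorElement]
    exact (QuotientGroup.eq_one_iff _).mpr ((hfrat x y).1)
  have hQexp : ∀ a : Q, a ^ p = 1 := by
    intro a
    obtain ⟨x, rfl⟩ := QuotientGroup.mk'_surjective F a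
    rw [← map_pow]
    exact (QuotientGroup.eq_one_iff _).mpr ((hfrat x x).2 x)
  letI cg : CommGroup Q := { (inferInstance : Group Q) with mul_comm := hQcomm }
  -- module structure over ZMod p
  set V := Additive Q with hV
  have hsmul : ∀ x : V, p • x = 0 := by
    intro x
    apply Additive.toMul.injective
    rw [toMul_nsmul]
    exact hQexp _
  have mi' : Module (ZMod p) V := AddCommGroup.zmodModule hsmul
  letI : Module (ZMod p) V := mi'
  haveI : Finite V := Finite.of_equiv Q Additive.ofMul
  -- the induced linear map
  set ψ : V →+ V := AddMonoidHom.mk' (fun v => Additive.ofMul (φQ v.toMul))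
    (fun a b => by
      show Additive.ofMul (φQ ((a + b).toMul)) = _
      rw [toMul_add, map_mul]
      rfl) with hψ
  set g : Module.End (ZMod p) V :=
    { toFun := ψ
      map_add' := ψ.map_add
      map_smul' := by
        intro c v
        obtain ⟨k, rfl⟩ := ZMod.natCast_zmod_surjective c
        simp only [RingHom.id_apply]
        rw [Nat.cast_smul_eq_nsmul, Nat.cast_smul_eq_nsmul, map_nsmul] } with hg
  -- iterates
  have hiter : ∀ (k : ℕ) (x : P),
      (g ^ k) (Additive.ofMul ((QuotientGroup.mk' F) x))
        = Additive.ofMul ((QuotientGroup.mk' F) ((φ ^ k) x)) := by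
    intro k
    induction k with
    | zero => intro x; simp
    | succ k ih =>
      intro x
      rw [pow_succ, Module.End.mul_apply, pow_succ]
      have h1 : g (Additive.ofMul ((QuotientGroup.mk' F) x))
          = Additive.ofMul ((QuotientGroup.mk' F) (φ x)) := by
        exact congrArg Additive.ofMul (hc x).symm
      rw [h1, ih (φ x)]
      rfl
  have hphi1 : φ ^ (p ^ n) = 1 := by rw [← hord]; exact pow_orderOf_eq_one φ
  have hgpow : g ^ (p ^ n) = 1 := by
    apply LinearMap.ext
    intro v
    obtain ⟨x, hx⟩ := QuotientGroup.mk'_surjective F v.toMul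
    have hv : v = Additive.ofMul ((QuotientGroup.mk' F) x) := by
      rw [hx]; rfl
    rw [hv, hiter (p ^ n) x, hphi1]
    rfl
  -- the difference endomorphism
  set δ : Module.End (ZMod p) V := g - 1 with hδ
  haveI : FiniteDimensional (ZMod p) V := Module.Finite.of_finite
  have hdim : Module.finrank (ZMod p) V ≤ m * p ^ n := by
    rcases subsingleton_or_nontrivial V with hs | hnt
    · have h0 : Module.finrank (ZMod p) V = 0 := Module.finrank_zero_of_subsingleton
      rw [h0]
      exact Nat.zero_le _
    · haveI : CharP (Module.End (ZMod p) V) p := by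
        refine charP_of_injective_algebraMap (R := ZMod p) ?_ p
        intro a b hab
        obtain ⟨v, hv⟩ := exists_ne (0 : V)
        have h2 : a • v = b • v := by
          have := congrArg (fun (t : Module.End (ZMod p) V) => t v) hab
          simpa [Module.algebraMap_end_apply] using this
        have h3 : (a - b) • v = 0 := by rw [sub_smul, h2, sub_self]
        rcases smul_eq_zero.mp h3 with h4 | h4
        · exact sub_eq_zero.mp h4
        · exact absurd h4 hv
      have hδpow : δ ^ (p ^ n) = 0 := by
        rw [hδ, sub_pow_char_pow_of_commute _ _ (Commute.one_right g), hgpow, one_pow, sub_self]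
      -- the kernel of δ is the fixed points
      have hkerfix : Nat.card (LinearMap.ker δ) ≤ p ^ m := by
        refine le_trans (le_of_eq (Nat.card_congr ?_)) hfixQ
        refine Equiv.subtypeEquiv (Additive.toMul (α := Q)) ?_
        intro v
        rw [LinearMap.mem_ker]
        constructor
        · intro h
          have : g v = v := by
            have := sub_eq_zero.mp (by
              rw [← h]
              show δ v = g v - v
              rw [hδ, LinearMap.sub_apply, Module.End.one_apply])
            exact this
          exact congrArg Additive.toMul this
        · intro h
          have hgv : g v = v := congrArg Additive.ofMul h
          show δ v = 0
          rw [hδ, LinearMap.sub_apply, Module.End.one_apply, hgv, sub_self]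
      have hkerfr : Module.finrank (ZMod p) (LinearMap.ker δ) ≤ m := by
        letI : Fintype (LinearMap.ker δ) := Fintype.ofFinite _
        have hc1 : Nat.card (LinearMap.ker δ)
            = p ^ Module.finrank (ZMod p) (LinearMap.ker δ) := by
          rw [Nat.card_eq_fintype_card, Module.card_eq_pow_finrank (K := ZMod p), ZMod.card]
        rw [hc1] at hkerfix
        exact (pow_le_pow_iff_right₀ hp.one_lt).mp hkerfix
      exact nilp_rank δ (p ^ n) m hδpow hkerfr
  -- basis of V
  set d := Module.finrank (ZMod p) V with hd
  set bas := Module.finBasis (ZMod p) V with hbas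
  set B : Set Q := Set.range (fun i : Fin d => Additive.toMul (bas i)) with hB
  have hclosB : Subgroup.closure B = ⊤ := by
    set H := Subgroup.closure B with hH
    set W : Submodule (ZMod p) V :=
      { carrier := {v : V | Additive.toMul v ∈ H}
        zero_mem' := H.one_mem
        add_mem' := fun {a b} ha hb => H.mul_mem ha hb
        smul_mem' := by
          intro c v hv
          obtain ⟨k, rfl⟩ := ZMod.natCast_zmod_surjective c
          simp only [Set.mem_setOf_eq] at hv ⊢
          rw [Nat.cast_smul_eq_nsmul]
          show Additive.toMul (k • v) ∈ H
          rw [toMul_nsmul]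
          exact H.pow_mem hv k } with hW
    have hWtop : W = ⊤ := by
      rw [eq_top_iff, ← bas.span_eq, Submodule.span_le]
      rintro v ⟨i, rfl⟩
      show Additive.toMul (bas i) ∈ H
      exact Subgroup.subset_closure ⟨i, rfl⟩
    rw [eq_top_iff]
    intro q _
    have hq : Additive.ofMul q ∈ W := by rw [hWtop]; trivial
    exact hq
  -- lift the generators to P
  choose l hl using fun q => QuotientGroup.mk'_surjective F q
  set S : Finset P := Finset.image (fun i : Fin d => l (Additive.toMul (bas i))) Finset.univ
    with hS
  refine ⟨S, ?_, ?_⟩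
  · calc S.card ≤ (Finset.univ : Finset (Fin d)).card := Finset.card_image_le
      _ = d := by simp
      _ ≤ m * p ^ n := hdim
  · have himg : (QuotientGroup.mk' F) '' (S : Set P) = B := by
      rw [hS, Finset.coe_image, Finset.coe_univ, Set.image_univ, ← Set.range_comp]
      refine congrArg Set.range (funext fun i => ?_)
      exact hl _
    have hmapS : Subgroup.map (QuotientGroup.mk' F) (Subgroup.closure (S : Set P)) = ⊤ := by
      rw [MonoidHom.map_closure, himg, hclosB]
    have h1 := Subgroup.comap_map_eq (QuotientGroup.mk' F) (Subgroup.closure (S : Set P))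
    rw [hmapS, Subgroup.comap_top, QuotientGroup.ker_mk'] at h1
    exact frattini_nongenerating h1.symm
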